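/- Probabilistic differential privacy implies differential privacy: let (Ω, 𝔉) be a measurable space, let λ be a measure on it, let f, g : Ω → [0, ∞] be measurable, and suppose μ = λ.withDensity f and ν = λ.withDensity g are probability measures. Let ε ∈ ℝ and δ ∈ [0, 1]. If μ({y ∈ Ω : f(y) > e^ε · g(y)}) ≤ δ, then for every measurable set S ⊆ Ω one has μ(S) ≤ e^ε · ν(S) + δ. -/

import Mathlib

open MeasureTheory ENNReal

/-- Probabilistic differential privacy implies differential privacy: if `μ = λ.withDensity f`
and `ν = λ.withDensity g` are probability measures and
`μ {y : f y > e^ε · g y} ≤ δ`, then for every measurable `S`,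
`μ S ≤ e^ε · ν S + δ`. -/
theorem pDP_implies_DP {Ω : Type*} [MeasurableSpace Ω] (lam : Measure Ω)
    (f g : Ω → ℝ≥0∞) (hf : Measurable f) (hg : Measurable g)
    (μ ν : Measure Ω) (hμ : μ = lam.withDensity f) (hν : ν = lam.withDensity g)
    (hμp : IsProbabilityMeasure μ) (hνp : IsProbabilityMeasure ν)
    (ε : ℝ) (δ : ℝ≥0∞) (hδ : δ ≤ 1)
    (hpDP : μ {y | f y > ENNReal.ofReal (Real.exp ε) * g y} ≤ δ) :
    ∀ S : Set Ω, MeasurableSet S → μ S ≤ ENNReal.ofReal (Real.exp ε) * ν S + δ := by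
  intro S hS
  set c := ENNReal.ofReal (Real.exp ε) with hc
  set B : Set Ω := {y | f y > c * g y} with hB
  have hBmeas : MeasurableSet B := measurableSet_lt (hg.const_mul c) hf
  have hsplit : μ S ≤ μ (S \ B) + μ (S ∩ B) := by
    calc μ S = μ ((S \ B) ∪ (S ∩ B)) := by rw [Set.diff_union_inter]
    _ ≤ μ (S \ B) + μ (S ∩ B) := measure_union_le _ _
  have h1 : μ (S ∩ B) ≤ δ := le_trans (measure_mono Set.inter_subset_right) hpDP
  have h2 : μ (S \ B) ≤ c * ν S := by
    rw [hμ, hν, withDensity_apply _ (hS.diff hBmeas), withDensity_apply _ hS]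
    calc ∫⁻ y in S \ B, f y ∂lam ≤ ∫⁻ y in S \ B, c * g y ∂lam := by
          refine setLIntegral_mono (hg.const_mul c) ?_
          intro y hy
          exact not_lt.mp hy.2
    _ = c * ∫⁻ y in S \ B, g y ∂lam := by rw [lintegral_const_mul _ hg]
    _ ≤ c * ∫⁻ y in S, g y ∂lam := by
          gcongr
          exact Set.diff_subset
  calc μ S ≤ μ (S \ B) + μ (S ∩ B) := hsplit
  _ ≤ c * ν S + δ := add_le_add h2 h1
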